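/- Let S₁, S₂, S₃ ∈ ℂ[d,k₁,k₂,k₃][t₀,t₁,t₂] be defined (with H, X, Y, Z, W, N₁, N₂, N₃ ∈ ℂ[t₀,t₁,t₂]) by S₁ = H(k₂Z - k₃Y)² - d²W²(k₂N₃ - k₃N₂)², S₂ = H(k₁Z - k₃X)² - d²W²(k₁N₃ - k₃N₁)², S₃ = H(k₁Y - k₂X)² - d²W²(k₁N₂ - k₂N₁)². If gcd(N₁,N₂,N₃) = 1 and gcd(X,Y,Z,W) = 1, then for S = c₁S₁ + c₂S₂ + c₃S₃ (with new indeterminates c₁,c₂,c₃), the content of S with respect to the variables (c,d,k) equals gcd(H, W²) in ℂ[t₀,t₁,t₂]. -/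

import Mathlib

/-- Base ring `ℂ[t₀,t₁,t₂]`. -/
abbrev TRing : Type := MvPolynomial (Fin 3) ℂ

/-- The ring `ℂ[t₀,t₁,t₂][c₁,c₂,c₃,d,k₁,k₂,k₃]`: variables `0,1,2` are `c₁,c₂,c₃`,
variable `3` is `d`, and variables `4,5,6` are `k₁,k₂,k₃`. -/
abbrev BigRing : Type := MvPolynomial (Fin 7) TRing

open MvPolynomial in
/-- `S₁ = H(k₂Z - k₃Y)² - d²W²(k₂N₃ - k₃N₂)²`. -/
noncomputable def S₁ (H Y Z W N₂ N₃ : TRing) : BigRing :=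
  C H * (X 5 * C Z - X 6 * C Y) ^ 2 - (X 3) ^ 2 * C (W ^ 2) * (X 5 * C N₃ - X 6 * C N₂) ^ 2

open MvPolynomial in
/-- `S₂ = H(k₁Z - k₃X)² - d²W²(k₁N₃ - k₃N₁)²`. -/
noncomputable def S₂ (H Xp Z W N₁ N₃ : TRing) : BigRing :=
  C H * (X 4 * C Z - X 6 * C Xp) ^ 2 - (X 3) ^ 2 * C (W ^ 2) * (X 4 * C N₃ - X 6 * C N₁) ^ 2

open MvPolynomial in
/-- `S₃ = H(k₁Y - k₂X)² - d²W²(k₁N₂ - k₂N₁)²`. -/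
noncomputable def S₃ (H Xp Y W N₁ N₂ : TRing) : BigRing :=
  C H * (X 4 * C Y - X 5 * C Xp) ^ 2 - (X 3) ^ 2 * C (W ^ 2) * (X 4 * C N₂ - X 5 * C N₁) ^ 2

open MvPolynomial in
/-- `S = c₁S₁ + c₂S₂ + c₃S₃`. -/
noncomputable def Sgen (H Xp Y Z W N₁ N₂ N₃ : TRing) : BigRing :=
  X 0 * S₁ H Y Z W N₂ N₃ + X 1 * S₂ H Xp Z W N₁ N₃ + X 2 * S₃ H Xp Y W N₁ N₂

/-- Auxiliary: in a UFD, an element dividing the squares of four jointly-relatively-prime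
elements is a unit. -/
lemma aux_unit4 {α : Type*} [CommMonoidWithZero α] [UniqueFactorizationMonoid α]
    {d a b c w : α} (da : d ∣ a ^ 2) (db : d ∣ b ^ 2) (dc : d ∣ c ^ 2) (dw : d ∣ w ^ 2)
    (hrel : ∀ e, e ∣ a → e ∣ b → e ∣ c → e ∣ w → IsUnit e) : IsUnit d := by
  by_contra hd
  rcases eq_or_ne a 0 with rfl | ha
  · rcases eq_or_ne b 0 with rfl | hb
    · rcases eq_or_ne c 0 with rfl | hc
      · rcases eq_or_ne w 0 with rfl | hw
        · exact hd (hrel d (dvd_zero d) (dvd_zero d) (dvd_zero d) (dvd_zero d))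
        · have hdne : d ≠ 0 := fun h => by
            rw [h, zero_dvd_iff] at dw
            exact hw (pow_eq_zero_iff (two_ne_zero) |>.mp dw)
          obtain ⟨p, hpirr, hpd⟩ := WfDvdMonoid.exists_irreducible_factor hd hdne
          have hp := UniqueFactorizationMonoid.irreducible_iff_prime.mp hpirr
          exact hp.not_isUnit (hrel p (dvd_zero p) (dvd_zero p) (dvd_zero p)
            (hp.dvd_of_dvd_pow (hpd.trans dw)))
      · have hdne : d ≠ 0 := fun h => by
          rw [h, zero_dvd_iff] at dc
          exact hc (pow_eq_zero_iff (two_ne_zero) |>.mp dc)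
        obtain ⟨p, hpirr, hpd⟩ := WfDvdMonoid.exists_irreducible_factor hd hdne
        have hp := UniqueFactorizationMonoid.irreducible_iff_prime.mp hpirr
        exact hp.not_isUnit (hrel p (dvd_zero p) (dvd_zero p)
          (hp.dvd_of_dvd_pow (hpd.trans dc)) (hp.dvd_of_dvd_pow (hpd.trans dw)))
    · have hdne : d ≠ 0 := fun h => by
        rw [h, zero_dvd_iff] at db
        exact hb (pow_eq_zero_iff (two_ne_zero) |>.mp db)
      obtain ⟨p, hpirr, hpd⟩ := WfDvdMonoid.exists_irreducible_factor hd hdne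
      have hp := UniqueFactorizationMonoid.irreducible_iff_prime.mp hpirr
      exact hp.not_isUnit (hrel p (dvd_zero p) (hp.dvd_of_dvd_pow (hpd.trans db))
        (hp.dvd_of_dvd_pow (hpd.trans dc)) (hp.dvd_of_dvd_pow (hpd.trans dw)))
  · have hdne : d ≠ 0 := fun h => by
      rw [h, zero_dvd_iff] at da
      exact ha (pow_eq_zero_iff (two_ne_zero) |>.mp da)
    obtain ⟨p, hpirr, hpd⟩ := WfDvdMonoid.exists_irreducible_factor hd hdne
    have hp := UniqueFactorizationMonoid.irreducible_iff_prime.mp hpirr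
    exact hp.not_isUnit (hrel p (hp.dvd_of_dvd_pow (hpd.trans da))
      (hp.dvd_of_dvd_pow (hpd.trans db)) (hp.dvd_of_dvd_pow (hpd.trans dc))
      (hp.dvd_of_dvd_pow (hpd.trans dw)))

/-- Auxiliary: `D ∣ w·a²`, `D ∣ w·b²`, `D ∣ w·c²` with `a,b,c` jointly relatively prime
forces `D ∣ w`. -/
lemma aux_dvdA {α : Type*} [CommMonoidWithZero α] [UniqueFactorizationMonoid α]
    [GCDMonoid α] {D w a b c : α} (h1 : D ∣ w * a ^ 2) (h2 : D ∣ w * b ^ 2)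
    (h3 : D ∣ w * c ^ 2) (hrel : ∀ e, e ∣ a → e ∣ b → e ∣ c → IsUnit e) : D ∣ w := by
  have h23 : D ∣ w * gcd (b ^ 2) (c ^ 2) :=
    (dvd_gcd h2 h3).trans (gcd_mul_left' w (b ^ 2) (c ^ 2)).dvd
  have h123 : D ∣ w * gcd (a ^ 2) (gcd (b ^ 2) (c ^ 2)) :=
    (dvd_gcd h1 h23).trans (gcd_mul_left' w _ _).dvd
  have hu : IsUnit (gcd (a ^ 2) (gcd (b ^ 2) (c ^ 2))) :=
    aux_unit4 (gcd_dvd_left _ _) ((gcd_dvd_right _ _).trans (gcd_dvd_left _ _))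
      ((gcd_dvd_right _ _).trans (gcd_dvd_right _ _))
      ((gcd_dvd_right _ _).trans (gcd_dvd_right _ _))
      (fun e hea heb hec _ => hrel e hea heb hec)
  exact h123.trans (associated_mul_unit_left w _ hu).dvd

/-- Auxiliary: `D ∣ H·a²`, `D ∣ H·b²`, `D ∣ H·c²`, `D ∣ w²` with `a,b,c,w` jointly
relatively prime forces `D ∣ H`. -/
lemma aux_dvdB {α : Type*} [CommMonoidWithZero α] [UniqueFactorizationMonoid α]
    [GCDMonoid α] {D H w a b c : α} (h1 : D ∣ H * a ^ 2) (h2 : D ∣ H * b ^ 2)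
    (h3 : D ∣ H * c ^ 2) (hw : D ∣ w ^ 2)
    (hrel : ∀ e, e ∣ a → e ∣ b → e ∣ c → e ∣ w → IsUnit e) : D ∣ H := by
  set g := gcd (a ^ 2) (gcd (b ^ 2) (c ^ 2)) with hg
  have h23 : D ∣ H * gcd (b ^ 2) (c ^ 2) :=
    (dvd_gcd h2 h3).trans (gcd_mul_left' H (b ^ 2) (c ^ 2)).dvd
  have h123 : D ∣ H * g := (dvd_gcd h1 h23).trans (gcd_mul_left' H _ _).dvd
  have hD : D ∣ gcd (w ^ 2) H * gcd (w ^ 2) g :=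
    (dvd_gcd hw h123).trans (gcd_mul_dvd_mul_gcd (w ^ 2) H g)
  have hu : IsUnit (gcd (w ^ 2) g) :=
    aux_unit4 ((gcd_dvd_right _ _).trans (gcd_dvd_left _ _))
      ((gcd_dvd_right _ _).trans ((gcd_dvd_right _ _).trans (gcd_dvd_left _ _)))
      ((gcd_dvd_right _ _).trans ((gcd_dvd_right _ _).trans (gcd_dvd_right _ _)))
      (gcd_dvd_left _ _) hrel
  exact (hD.trans (mul_dvd_mul_right (gcd_dvd_right _ _) _)).trans
    (associated_mul_unit_left H _ hu).dvd

/-- TRing-specialised version of `aux_dvdA`. -/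
lemma aux_dvdA' {D w a b c : TRing} (h1 : D ∣ w * a ^ 2) (h2 : D ∣ w * b ^ 2)
    (h3 : D ∣ w * c ^ 2) (hrel : ∀ e, e ∣ a → e ∣ b → e ∣ c → IsUnit e) : D ∣ w := by
  letI : NormalizationMonoid TRing :=
    (UniqueFactorizationMonoid.normalizationMonoid (α := TRing)).toNormalizationMonoid
  letI : GCDMonoid TRing :=
    (UniqueFactorizationMonoid.toNormalizedGCDMonoid TRing).toGCDMonoid
  exact aux_dvdA h1 h2 h3 hrel

/-- TRing-specialised version of `aux_dvdB`. -/
lemma aux_dvdB' {D H w a b c : TRing} (h1 : D ∣ H * a ^ 2) (h2 : D ∣ H * b ^ 2)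
    (h3 : D ∣ H * c ^ 2) (hw : D ∣ w ^ 2)
    (hrel : ∀ e, e ∣ a → e ∣ b → e ∣ c → e ∣ w → IsUnit e) : D ∣ H := by
  letI : NormalizationMonoid TRing :=
    (UniqueFactorizationMonoid.normalizationMonoid (α := TRing)).toNormalizationMonoid
  letI : GCDMonoid TRing :=
    (UniqueFactorizationMonoid.toNormalizedGCDMonoid TRing).toGCDMonoid
  exact aux_dvdB h1 h2 h3 hw hrel

set_option maxHeartbeats 2000000 in
/-- if `gcd(N₁,N₂,N₃) = 1` and `gcd(X,Y,Z,W) = 1`, then the content of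
`S = c₁S₁ + c₂S₂ + c₃S₃` with respect to the variables `(c,d,k)` equals `gcd(H, W²)`
in `ℂ[t₀,t₁,t₂]`; equivalently, a polynomial `D` divides all the `(c,d,k)`-coefficients
of `S` if and only if it divides both `H` and `W²`. -/
theorem content_of_auxiliary_combination (H Xp Y Z W N₁ N₂ N₃ : TRing)
    (hN : ∀ D : TRing, D ∣ N₁ → D ∣ N₂ → D ∣ N₃ → IsUnit D)
    (hXYZW : ∀ D : TRing, D ∣ Xp → D ∣ Y → D ∣ Z → D ∣ W → IsUnit D) :
    ∀ D : TRing,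
      (∀ e : Fin 7 →₀ ℕ, D ∣ MvPolynomial.coeff e (Sgen H Xp Y Z W N₁ N₂ N₃)) ↔
        (D ∣ H ∧ D ∣ W ^ 2) := by
  classical
  intro D
  constructor
  · intro h
    have hC : MvPolynomial.C D ∣ Sgen H Xp Y Z W N₁ N₂ N₃ :=
      (MvPolynomial.C_dvd_iff_dvd_coeff D _).mpr h
    have key : ∀ v : Fin 7 → TRing,
        D ∣ MvPolynomial.eval v (Sgen H Xp Y Z W N₁ N₂ N₃) := by
      intro v
      obtain ⟨q, hq⟩ := hC
      rw [hq, map_mul, MvPolynomial.eval_C]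
      exact Dvd.intro _ rfl
    have e1 : MvPolynomial.eval (fun i => if i = 0 then 1 else if i = 5 then 1 else 0)
        (Sgen H Xp Y Z W N₁ N₂ N₃) = H * Z ^ 2 := by
      simp only [Sgen, S₁, S₂, S₃, map_add, map_mul, map_sub, map_pow,
        MvPolynomial.eval_C, MvPolynomial.eval_X]
      simp (config := { decide := true })
    have e1' : MvPolynomial.eval
        (fun i => if i = 0 then 1 else if i = 5 then 1 else if i = 3 then 1 else 0)
        (Sgen H Xp Y Z W N₁ N₂ N₃) = H * Z ^ 2 - W ^ 2 * N₃ ^ 2 := by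
      simp only [Sgen, S₁, S₂, S₃, map_add, map_mul, map_sub, map_pow,
        MvPolynomial.eval_C, MvPolynomial.eval_X]
      simp (config := { decide := true })
    have e2 : MvPolynomial.eval (fun i => if i = 0 then 1 else if i = 6 then 1 else 0)
        (Sgen H Xp Y Z W N₁ N₂ N₃) = H * Y ^ 2 := by
      simp only [Sgen, S₁, S₂, S₃, map_add, map_mul, map_sub, map_pow,
        MvPolynomial.eval_C, MvPolynomial.eval_X]
      simp (config := { decide := true })
    have e2' : MvPolynomial.eval
        (fun i => if i = 0 then 1 else if i = 6 then 1 else if i = 3 then 1 else 0)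
        (Sgen H Xp Y Z W N₁ N₂ N₃) = H * Y ^ 2 - W ^ 2 * N₂ ^ 2 := by
      simp only [Sgen, S₁, S₂, S₃, map_add, map_mul, map_sub, map_pow,
        MvPolynomial.eval_C, MvPolynomial.eval_X]
      simp (config := { decide := true })
    have e3 : MvPolynomial.eval (fun i => if i = 1 then 1 else if i = 6 then 1 else 0)
        (Sgen H Xp Y Z W N₁ N₂ N₃) = H * Xp ^ 2 := by
      simp only [Sgen, S₁, S₂, S₃, map_add, map_mul, map_sub, map_pow,
        MvPolynomial.eval_C, MvPolynomial.eval_X]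
      simp (config := { decide := true })
    have e3' : MvPolynomial.eval
        (fun i => if i = 1 then 1 else if i = 6 then 1 else if i = 3 then 1 else 0)
        (Sgen H Xp Y Z W N₁ N₂ N₃) = H * Xp ^ 2 - W ^ 2 * N₁ ^ 2 := by
      simp only [Sgen, S₁, S₂, S₃, map_add, map_mul, map_sub, map_pow,
        MvPolynomial.eval_C, MvPolynomial.eval_X]
      simp (config := { decide := true })
    have dHZ : D ∣ H * Z ^ 2 := e1 ▸ key _
    have dHY : D ∣ H * Y ^ 2 := e2 ▸ key _
    have dHX : D ∣ H * Xp ^ 2 := e3 ▸ key _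
    have dWN3 : D ∣ W ^ 2 * N₃ ^ 2 := by
      have := e1' ▸ key _
      have h' := dvd_sub dHZ this
      simpa using h'
    have dWN2 : D ∣ W ^ 2 * N₂ ^ 2 := by
      have := e2' ▸ key _
      have h' := dvd_sub dHY this
      simpa using h'
    have dWN1 : D ∣ W ^ 2 * N₁ ^ 2 := by
      have := e3' ▸ key _
      have h' := dvd_sub dHX this
      simpa using h'
    have hW2 : D ∣ W ^ 2 := aux_dvdA' dWN1 dWN2 dWN3 hN
    exact ⟨aux_dvdB' dHX dHY dHZ hW2 hXYZW, hW2⟩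
  · rintro ⟨hH, hW⟩ e
    apply (MvPolynomial.C_dvd_iff_dvd_coeff D _).mp _ e
    have hCH : MvPolynomial.C D ∣ (MvPolynomial.C H : BigRing) := by
      obtain ⟨h, rfl⟩ := hH
      exact ⟨MvPolynomial.C h, by rw [map_mul]⟩
    have hCW : MvPolynomial.C D ∣ (MvPolynomial.C (W ^ 2) : BigRing) := by
      obtain ⟨w, hw⟩ := hW
      exact ⟨MvPolynomial.C w, by rw [← map_mul, hw]⟩
    unfold Sgen S₁ S₂ S₃
    refine dvd_add (dvd_add (Dvd.dvd.mul_left ?_ _) (Dvd.dvd.mul_left ?_ _))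
      (Dvd.dvd.mul_left ?_ _) <;>
    exact dvd_sub (Dvd.dvd.mul_right hCH _) (Dvd.dvd.mul_right (hCW.mul_left _) _)
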